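/- For every ε ∈ (0,1/32), every process on I_ε with Σ_{i ∈ I_ε} p_i^1 = 1, and every step t: if δ_{+,−}^t ≥ (1/(2B_ε)) · Σ_{j ∈ I_ε⁺} p_j^t and W_t ≥ 16 · ε · B_ε, then W_{t+1} ≤ (1 − 1/(9B_ε)) · W_t. -/

import Mathlib

/-- `B_ε := 2⌈log₂(1/ε)⌉ + 1`. -/
noncomputable def Bval (ε : ℝ) : ℤ := 2 * ⌈Real.logb 2 (1 / ε)⌉ + 1

/-- `I_ε`: the odd integers `i` with `-B_ε ≤ i ≤ B_ε`. -/
noncomputable def Iset (ε : ℝ) : Finset ℤ :=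
  (Finset.Icc (-(Bval ε)) (Bval ε)).filter (fun i => Odd i)

/-- `I_ε⁺ := I_ε ∩ {i > 0}`. -/
noncomputable def Ipos (ε : ℝ) : Finset ℤ := (Iset ε).filter (fun i => 0 < i)

/-- `I_ε⁻ := I_ε ∩ {i < 0}`. -/
noncomputable def Ineg (ε : ℝ) : Finset ℤ := (Iset ε).filter (fun i => i < 0)

/-- A process on `I_ε` (Definition 4 of the paper): at each step `t ≥ 1` and each `i ∈ I_ε`,
an amount `q t i` with `0 ≤ q t i ≤ p t i` of the weight `p t i` moves to position `i - 2`
and the remaining `p t i - q t i` moves to position `i + 2`, clamped to stay in `[-B_ε, B_ε]`;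
`p (t+1) i` is the total weight arriving at `i`.  Moreover:
(i) at every step at least `15/16` of the mass on `I_ε⁺` moves down, and
(ii) for every `i ∈ I_ε⁻` whose mass is at least `(1/B_ε⁴) Σ_{j ∈ I_ε⁺} p t j`,
at most `1/16` of the weight at `i` moves up. -/
structure MProcess (ε : ℝ) where
  p : ℕ → ℤ → ℝ
  q : ℕ → ℤ → ℝ
  q_nonneg : ∀ t i, 0 ≤ q t i
  q_le_p : ∀ t i, q t i ≤ p t i
  update : ∀ t, 1 ≤ t → ∀ i ∈ Iset ε,
    p (t + 1) i =
      (∑ j ∈ (Iset ε).filter (fun j => max (j - 2) (-(Bval ε)) = i), q t j) +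
      (∑ j ∈ (Iset ε).filter (fun j => min (j + 2) (Bval ε) = i), (p t j - q t j))
  mass_down : ∀ t, 1 ≤ t →
    (15 / 16 : ℝ) * ∑ i ∈ Ipos ε, p t i ≤ ∑ i ∈ Ipos ε, q t i
  up_small : ∀ t, 1 ≤ t → ∀ i ∈ Ineg ε,
    (1 / (Bval ε : ℝ) ^ 4) * (∑ j ∈ Ipos ε, p t j) ≤ p t i →
    p t i - q t i ≤ (1 / 16 : ℝ) * p t i

/-- `W_t := Σ_{i ∈ I_ε⁻} 2^i p_i^t + Σ_{i ∈ I_ε⁺} p_i^t`. -/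
noncomputable def Wfun (ε : ℝ) (P : MProcess ε) (t : ℕ) : ℝ :=
  (∑ i ∈ Ineg ε, (2 : ℝ) ^ i * P.p t i) + ∑ i ∈ Ipos ε, P.p t i

/-- weight function: `2^i` for negative positions, `1` for positive ones. -/
noncomputable def wfn (i : ℤ) : ℝ := if i < 0 then (2:ℝ)^i else 1

lemma odd_Bval (ε : ℝ) : Odd (Bval ε) := ⟨⌈Real.logb 2 (1/ε)⌉, by unfold Bval; ring⟩

lemma mem_Iset_iff {ε : ℝ} {i : ℤ} :
    i ∈ Iset ε ↔ -(Bval ε) ≤ i ∧ i ≤ Bval ε ∧ Odd i := by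
  simp [Iset, Finset.mem_Icc, and_assoc]

lemma Bval_ge11 {ε : ℝ} (hε : ε ∈ Set.Ioo (0:ℝ) (1/32)) : 11 ≤ Bval ε := by
  have h32 : (32:ℝ) ≤ 1/ε := by
    rw [le_div_iff₀ hε.1]
    nlinarith [hε.2]
  have hlog32 : Real.logb 2 32 = 5 := by
    have h : (32:ℝ) = 2^(5:ℕ) := by norm_num
    rw [h, Real.logb_pow, Real.logb_self_eq_one one_lt_two]
    norm_num
  have h5 : (5:ℝ) ≤ Real.logb 2 (1/ε) := by
    rw [← hlog32]
    exact Real.logb_le_logb_of_le one_lt_two (by norm_num) h32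
  have h5' : (5:ℤ) ≤ ⌈Real.logb 2 (1/ε)⌉ := by
    exact_mod_cast le_trans h5 (Int.le_ceil _)
  unfold Bval; omega

lemma twopow_neg_Bval {ε : ℝ} (hε : ε ∈ Set.Ioo (0:ℝ) (1/32)) :
    (2:ℝ) ^ (-(Bval ε)) ≤ ε^2 / 2 := by
  set L := Real.logb 2 (1/ε) with hL
  have hεpos := hε.1
  have h1ε : (0:ℝ) < 1/ε := by positivity
  have hBr : 2 * L + 1 ≤ ((Bval ε : ℤ) : ℝ) := by
    have := Int.le_ceil L
    unfold Bval
    push_cast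
    linarith
  have e1 : (2:ℝ) ^ (-(Bval ε)) = (2:ℝ) ^ ((-(Bval ε) : ℤ) : ℝ) :=
    (Real.rpow_intCast 2 (-(Bval ε))).symm
  have e2 : ((-(Bval ε) : ℤ) : ℝ) ≤ -(2*L+1) := by push_cast; linarith
  have e3 : (2:ℝ) ^ ((-(Bval ε) : ℤ) : ℝ) ≤ (2:ℝ) ^ (-(2*L+1) : ℝ) :=
    Real.rpow_le_rpow_of_exponent_le one_le_two e2
  have e4 : (2:ℝ) ^ (-(2*L+1) : ℝ) = ε^2/2 := by
    have h2L : (2:ℝ) ^ L = 1/ε := Real.rpow_logb two_pos (by norm_num) h1ε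
    have : (-(2*L+1) : ℝ) = L * (-2) + (-1) := by ring
    rw [this, Real.rpow_add two_pos, Real.rpow_mul (le_of_lt two_pos), h2L]
    rw [show ((-2:ℝ)) = ((-2:ℤ):ℝ) by norm_num, Real.rpow_intCast,
        show ((-1:ℝ)) = ((-1:ℤ):ℝ) by norm_num, Real.rpow_intCast]
    have hε0 : ε ≠ 0 := ne_of_gt hεpos
    rw [zpow_neg, zpow_neg, show ((2:ℤ)) = ((2:ℕ):ℤ) from rfl, zpow_natCast,
        show ((1:ℤ)) = ((1:ℕ):ℤ) from rfl, zpow_natCast]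
    field_simp
  calc (2:ℝ) ^ (-(Bval ε)) = (2:ℝ) ^ ((-(Bval ε) : ℤ) : ℝ) := e1
    _ ≤ (2:ℝ) ^ (-(2*L+1) : ℝ) := e3
    _ = ε^2/2 := e4

set_option maxHeartbeats 1000000 in
/-- Case 2 of the proof of Lemma 3: if at step `t` the mass `δ_{+,-}^t`
moving from `+1` to `-1` is at least `(1/(2B_ε)) Σ_{j ∈ I_ε⁺} p_j^t` and `W_t ≥ 16 ε B_ε`, then
`W_{t+1} ≤ (1 - 1/(9B_ε)) W_t`. -/
theorem stmt3 :
    ∀ ε : ℝ, ε ∈ Set.Ioo (0 : ℝ) (1 / 32) →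
      ∀ P : MProcess ε, (∑ i ∈ Iset ε, P.p 1 i) = 1 →
        ∀ t : ℕ, 1 ≤ t →
          (1 / (2 * (Bval ε : ℝ))) * (∑ j ∈ Ipos ε, P.p t j) ≤ P.q t 1 →
          16 * ε * (Bval ε : ℝ) ≤ Wfun ε P t →
          Wfun ε P (t + 1) ≤ (1 - 1 / (9 * (Bval ε : ℝ))) * Wfun ε P t := by
  intro ε hε P hmass t ht hq1 hWlb
  have hεpos := hε.1
  have hB11 : (11:ℤ) ≤ Bval ε := Bval_ge11 hε
  obtain ⟨m, hm⟩ := odd_Bval ε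
  set B : ℤ := Bval ε with hBdef
  set b : ℝ := (B : ℝ) with hbdef
  have hb11 : (11:ℝ) ≤ b := by rw [hbdef]; exact_mod_cast hB11
  have hb0 : (0:ℝ) < b := by linarith
  have hbne : b ≠ 0 := ne_of_gt hb0
  have hcast : ((Bval ε : ℝ)) = b := by rw [hbdef, hBdef]
  have hp0 : ∀ s i, 0 ≤ P.p s i := fun s i => le_trans (P.q_nonneg s i) (P.q_le_p s i)
  -- the two transition maps preserve Iset
  have hd : ∀ j ∈ Iset ε, max (j - 2) (-B) ∈ Iset ε := by
    intro j hj
    obtain ⟨h1, h2, k, hk⟩ := mem_Iset_iff.mp hj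
    rcases le_total (j - 2) (-B) with h | h
    · rw [max_eq_right h]
      exact mem_Iset_iff.mpr ⟨le_refl _, by omega, ⟨-m-1, by omega⟩⟩
    · rw [max_eq_left h]
      exact mem_Iset_iff.mpr ⟨by omega, by omega, ⟨k-1, by omega⟩⟩
  have hu : ∀ j ∈ Iset ε, min (j + 2) B ∈ Iset ε := by
    intro j hj
    obtain ⟨h1, h2, k, hk⟩ := mem_Iset_iff.mp hj
    rcases le_total (j + 2) B with h | h
    · rw [min_eq_left h]
      exact mem_Iset_iff.mpr ⟨by omega, by omega, ⟨k+1, by omega⟩⟩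
    · rw [min_eq_right h]
      exact mem_Iset_iff.mpr ⟨by omega, le_refl _, ⟨m, by omega⟩⟩
  -- mass conservation
  have hcons : ∀ s, 1 ≤ s → ∑ i ∈ Iset ε, P.p s i = 1 := by
    intro s hs
    induction s, hs using Nat.le_induction with
    | base => exact hmass
    | succ n hn ih =>
      have step : ∑ i ∈ Iset ε, P.p (n+1) i = ∑ i ∈ Iset ε, P.p n i := by
        rw [Finset.sum_congr rfl (fun i hi => P.update n hn i hi),
            Finset.sum_add_distrib,
            Finset.sum_fiberwise_of_maps_to hd,
            Finset.sum_fiberwise_of_maps_to hu,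
            Finset.sum_sub_distrib]
        ring
      rw [step, ih]
  have hple : ∀ i ∈ Iset ε, P.p t i ≤ 1 := by
    intro i hi
    have h := Finset.single_le_sum (f := P.p t) (fun j _ => hp0 t j) hi
    rwa [hcons t ht] at h
  -- splitting sums over Iset
  have hsplit : ∀ f : ℤ → ℝ, ∑ i ∈ Iset ε, f i = ∑ i ∈ Ineg ε, f i + ∑ i ∈ Ipos ε, f i := by
    intro f
    have h2 : (Iset ε).filter (fun i => ¬ i < 0) = Ipos ε := by
      unfold Ipos
      apply Finset.filter_congr
      intro i hi
      obtain ⟨_, _, k, hk⟩ := mem_Iset_iff.mp hi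
      constructor <;> intro <;> omega
    rw [show Ineg ε = (Iset ε).filter (fun i => i < 0) from rfl, ← h2]
    exact (Finset.sum_filter_add_sum_filter_not (Iset ε) (fun i => i < 0) f).symm
  have hWsum : ∀ s, Wfun ε P s = ∑ i ∈ Iset ε, wfn i * P.p s i := by
    intro s
    rw [Wfun, hsplit (fun i => wfn i * P.p s i)]
    congr 1
    · refine Finset.sum_congr rfl fun i hi => ?_
      have h : i < 0 := (Finset.mem_filter.mp hi).2
      simp [wfn, h]
    · refine Finset.sum_congr rfl fun i hi => ?_
      have h : 0 < i := (Finset.mem_filter.mp hi).2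
      simp [wfn, not_lt.mpr h.le]
  -- the key reformulation of W_{t+1}
  set F : ℤ → ℝ := fun j =>
    wfn (max (j - 2) (-B)) * P.q t j + wfn (min (j + 2) B) * (P.p t j - P.q t j) with hFdef
  have hkey : Wfun ε P (t+1) = ∑ j ∈ Iset ε, F j := by
    rw [hWsum (t+1)]
    have e1 : ∀ i ∈ Iset ε, wfn i * P.p (t+1) i =
        (∑ j ∈ (Iset ε).filter (fun j => max (j - 2) (-B) = i),
          wfn (max (j - 2) (-B)) * P.q t j) +
        (∑ j ∈ (Iset ε).filter (fun j => min (j + 2) B = i),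
          wfn (min (j + 2) B) * (P.p t j - P.q t j)) := by
      intro i hi
      rw [P.update t ht i hi, mul_add, Finset.mul_sum, Finset.mul_sum]
      congr 1
      · exact Finset.sum_congr rfl fun j hj => by rw [← (Finset.mem_filter.mp hj).2]
      · exact Finset.sum_congr rfl fun j hj => by rw [← (Finset.mem_filter.mp hj).2]
    rw [Finset.sum_congr rfl e1, Finset.sum_add_distrib,
        Finset.sum_fiberwise_of_maps_to hd (fun j => wfn (max (j - 2) (-B)) * P.q t j),
        Finset.sum_fiberwise_of_maps_to hu (fun j => wfn (min (j + 2) B) * (P.p t j - P.q t j)),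
        ← Finset.sum_add_distrib]
  set S : ℝ := ∑ j ∈ Ipos ε, P.p t j with hSdef
  set Wn : ℝ := ∑ i ∈ Ineg ε, (2:ℝ)^i * P.p t i with hWndef
  have hS0 : 0 ≤ S := Finset.sum_nonneg fun j _ => hp0 t j
  have hWn0 : 0 ≤ Wn := Finset.sum_nonneg fun j _ =>
    mul_nonneg (le_of_lt (zpow_pos two_pos j)) (hp0 t j)
  have hWt : Wfun ε P t = Wn + S := rfl
  rw [hWt] at hWlb
  clear_value S Wn F
  -- positive-side sum
  have h1I : (1:ℤ) ∈ Iset ε := mem_Iset_iff.mpr ⟨by omega, by omega, ⟨0, by ring⟩⟩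
  have h1mem : (1:ℤ) ∈ Ipos ε := Finset.mem_filter.mpr ⟨h1I, by norm_num⟩
  have hposF : ∑ j ∈ Ipos ε, F j = S - P.q t 1 / 2 := by
    rw [Finset.sum_eq_sum_sdiff_singleton_add h1mem F]
    have hFj : ∀ j ∈ Ipos ε \ {1}, F j = P.p t j := by
      intro j hj
      obtain ⟨hj1, hj2⟩ := Finset.mem_sdiff.mp hj
      have hjI : j ∈ Iset ε := (Finset.mem_filter.mp hj1).1
      have hjpos : 0 < j := (Finset.mem_filter.mp hj1).2
      have hjne : j ≠ 1 := by simpa using hj2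
      obtain ⟨_, hle2, k, hk⟩ := mem_Iset_iff.mp hjI
      have hj3 : 3 ≤ j := by omega
      have hw1 : wfn (max (j - 2) (-B)) = 1 := by
        rw [max_eq_left (by omega : -B ≤ j - 2)]
        simp only [wfn, if_neg (by omega : ¬ (j - 2 < 0))]
      have hw2 : wfn (min (j + 2) B) = 1 := by
        have h : ¬ (min (j + 2) B < 0) := by
          simp only [not_lt, le_min_iff]
          omega
        simp only [wfn, if_neg h]
      simp only [hFdef, hw1, hw2]
      ring
    rw [Finset.sum_congr rfl hFj]
    have hF1 : F 1 = P.p t 1 - P.q t 1 / 2 := by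
      have hd1 : max ((1:ℤ) - 2) (-B) = -1 := max_eq_left (by omega)
      have hu1 : min ((1:ℤ) + 2) B = 3 := min_eq_left (by omega)
      simp only [hFdef, hd1, hu1]
      norm_num [wfn]
      ring
    have hS1 : ∑ j ∈ Ipos ε \ {1}, P.p t j = S - P.p t 1 := by
      have h := Finset.sum_eq_sum_sdiff_singleton_add h1mem (P.p t)
      rw [hSdef]; linarith
    rw [hF1, hS1]; ring
  -- negative-side pointwise bound
  have hBneg : (-B : ℤ) ∈ Ineg ε := by
    refine Finset.mem_filter.mpr ⟨mem_Iset_iff.mpr ⟨le_refl _, by omega, ⟨-m-1, by omega⟩⟩, by omega⟩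
  have hptw : ∀ j ∈ Ineg ε, F j ≤
      (1/2) * ((2:ℝ)^j * P.p t j) + 2 * S / b^4
        + (if j = -B then 4 * (2:ℝ)^(-B) else 0) := by
    intro j hj
    obtain ⟨hjI, hjneg⟩ := Finset.mem_filter.mp hj
    obtain ⟨hge, hle2, k, hk⟩ := mem_Iset_iff.mp hjI
    have hq0 := P.q_nonneg t j
    have hqp := P.q_le_p t j
    have hpj0 : 0 ≤ P.p t j := hp0 t j
    have h2j : (0:ℝ) < (2:ℝ)^j := zpow_pos two_pos j
    have hu2 : min (j + 2) B = j + 2 := min_eq_left (by omega)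
    have hwu : wfn (min (j + 2) B) ≤ 4 * (2:ℝ)^j := by
      rw [hu2]
      by_cases h : j + 2 < 0
      · simp only [wfn, if_pos h]
        have : (2:ℝ)^(j+2) = (2:ℝ)^j * 4 := by
          rw [zpow_add₀ (two_ne_zero) j 2]; norm_num
        rw [this]; linarith
      · have hj1 : j = -1 := by omega
        subst hj1
        simp only [wfn]
        norm_num
    have hwu0 : 0 ≤ wfn (min (j + 2) B) := by
      rw [hu2]; unfold wfn; split
      · exact le_of_lt (zpow_pos two_pos _)
      · norm_num
    by_cases hjB : j = -B
    · -- the bottom position: use p ≤ 1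
      have hpj1 : P.p t j ≤ 1 := hple j hjI
      have hwd : wfn (max (j - 2) (-B)) = (2:ℝ)^(-B) := by
        rw [max_eq_right (by omega : j - 2 ≤ -B), show wfn (-B) = (2:ℝ)^(-B) from
          if_pos (by omega : -B < 0)]
      have h2B0 : (0:ℝ) < (2:ℝ)^(-B) := zpow_pos two_pos _
      have hterm : F j ≤ 4 * (2:ℝ)^(-B) := by
        have e1 : wfn (max (j - 2) (-B)) * P.q t j ≤ (2:ℝ)^(-B) * P.p t j := by
          rw [hwd]; nlinarith
        have e2 : wfn (min (j + 2) B) * (P.p t j - P.q t j)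
            ≤ 4 * (2:ℝ)^j * (P.p t j - P.q t j) :=
          mul_le_mul_of_nonneg_right hwu (by linarith)
        have e3 : (2:ℝ)^j = (2:ℝ)^(-B) := by rw [hjB]
        simp only [hFdef]
        nlinarith
      rw [if_pos hjB]
      have h1 : 0 ≤ (1/2) * ((2:ℝ)^j * P.p t j) := by positivity
      have h2 : 0 ≤ 2 * S / b^4 := div_nonneg (by linarith) (by positivity)
      linarith
    · have hwd : wfn (max (j - 2) (-B)) = (2:ℝ)^j / 4 := by
        have hge2 : -B ≤ j - 2 := by omega
        rw [max_eq_left hge2, show wfn (j-2) = (2:ℝ)^(j-2) from if_pos (by omega : j - 2 < 0)]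
        rw [show j = (j - 2) + 2 by ring, zpow_add₀ (two_ne_zero) (j-2) 2]
        ring_nf
        try norm_num
      by_cases hheavy : (1 / b^4) * S ≤ P.p t j
      · have hup := P.up_small t ht j hj (by rw [hcast, ← hSdef]; exact hheavy)
        have e1 : wfn (max (j - 2) (-B)) * P.q t j ≤ ((2:ℝ)^j / 4) * P.p t j := by
          rw [hwd]; nlinarith
        have e2 : wfn (min (j + 2) B) * (P.p t j - P.q t j)
            ≤ 4 * (2:ℝ)^j * ((1/16) * P.p t j) := by
          calc wfn (min (j + 2) B) * (P.p t j - P.q t j)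
              ≤ 4 * (2:ℝ)^j * (P.p t j - P.q t j) :=
                mul_le_mul_of_nonneg_right hwu (by linarith)
            _ ≤ 4 * (2:ℝ)^j * ((1/16) * P.p t j) :=
                mul_le_mul_of_nonneg_left hup (by positivity)
        have h3 : (0:ℝ) ≤ 2 * S / b^4 := div_nonneg (by linarith) (by positivity)
        have h4 : (0:ℝ) ≤ (if j = -B then 4 * (2:ℝ)^(-B) else 0) := by
          rw [if_neg hjB]
        simp only [hFdef]
        nlinarith
      · push_neg at hheavy
        have h2jle : (2:ℝ)^j ≤ 1/2 := by
          calc (2:ℝ)^j ≤ (2:ℝ)^(-1 : ℤ) := zpow_le_zpow_right₀ one_le_two (by omega)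
            _ = 1/2 := by norm_num
        have e1 : wfn (max (j - 2) (-B)) * P.q t j ≤ (2:ℝ)^j * P.p t j := by
          rw [hwd]; nlinarith
        have e2 : wfn (min (j + 2) B) * (P.p t j - P.q t j)
            ≤ 4 * (2:ℝ)^j * (P.p t j - P.q t j) :=
          mul_le_mul_of_nonneg_right hwu (by linarith)
        have e3 : F j ≤ 2 * S / b^4 := by
          have h2 : F j ≤ 4 * ((2:ℝ)^j * P.p t j) := by
            simp only [hFdef]; nlinarith
          have h3 : (2:ℝ)^j * P.p t j ≤ (1/2) * P.p t j :=
            mul_le_mul_of_nonneg_right h2jle hpj0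
          have h4 : P.p t j ≤ S / b^4 := by
            have := hheavy.le
            rw [div_mul_eq_mul_div, one_mul] at this
            linarith
          have hdiv : 2 * S / b^4 = 2 * (S / b^4) := by ring
          linarith
        have h1 : 0 ≤ (1/2) * ((2:ℝ)^j * P.p t j) := by positivity
        have h4 : (0:ℝ) ≤ (if j = -B then 4 * (2:ℝ)^(-B) else 0) := by
          rw [if_neg hjB]
        linarith
  -- negative-side sum
  have hcard : ((Ineg ε).card : ℝ) ≤ b := by
    have hsub : Ineg ε ⊆ Finset.Icc (-B) (-1) := by
      intro j hj
      obtain ⟨hjI, hjneg⟩ := Finset.mem_filter.mp hj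
      obtain ⟨hge, _, _⟩ := mem_Iset_iff.mp hjI
      exact Finset.mem_Icc.mpr ⟨hge, by omega⟩
    have h1 := Finset.card_le_card hsub
    rw [Int.card_Icc] at h1
    have h2 : ((Ineg ε).card : ℤ) ≤ B := by
      have := Int.toNat_of_nonneg (by omega : (0:ℤ) ≤ -1 + 1 - (-B))
      omega
    rw [hbdef]; exact_mod_cast h2
  have hnegF : ∑ j ∈ Ineg ε, F j ≤ (1/2) * Wn + b * (2 * S / b^4) + 4 * (2:ℝ)^(-B) := by
    calc ∑ j ∈ Ineg ε, F j
        ≤ ∑ j ∈ Ineg ε, ((1/2) * ((2:ℝ)^j * P.p t j) + 2 * S / b^4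
            + (if j = -B then 4 * (2:ℝ)^(-B) else 0)) := Finset.sum_le_sum hptw
      _ = (1/2) * Wn + (Ineg ε).card * (2 * S / b^4) + 4 * (2:ℝ)^(-B) := by
          rw [Finset.sum_add_distrib, Finset.sum_add_distrib, ← Finset.mul_sum,
              Finset.sum_const, Finset.sum_ite_eq' (Ineg ε) (-B)
                (fun _ => 4 * (2:ℝ)^(-B)), if_pos hBneg]
          rw [hWndef, nsmul_eq_mul]
      _ ≤ (1/2) * Wn + b * (2 * S / b^4) + 4 * (2:ℝ)^(-B) := by
          have h : (0:ℝ) ≤ 2 * S / b^4 := by positivity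
          nlinarith
  -- assemble
  have h2B : (2:ℝ)^(-B) ≤ ε^2/2 := twopow_neg_Bval hε
  rw [hkey, hsplit F, hposF, hWt]
  -- pass to the variable v = 1/b
  set v : ℝ := 1/b with hvdef
  have hv0 : 0 < v := by positivity
  have hvb : v * b = 1 := by rw [hvdef]; field_simp
  have hv11 : v ≤ 1/11 := by
    rw [hvdef]
    rw [div_le_div_iff₀ hb0 (by norm_num)]
    linarith
  have hid1 : b * (2 * S / b^4) = 2 * (S * v^3) := by
    rw [hvdef]; field_simp
  have hid2 : (1 / (2 * b)) * S = (v * S) / 2 := by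
    rw [hvdef]; ring
  have hid3 : 1 / (9 * b) = v / 9 := by
    rw [hvdef]; ring
  rw [hid3]
  have hq1' : (v * S) / 2 ≤ P.q t 1 := by rw [← hid2]; exact hq1
  have hXY : 16 * ε ≤ v * Wn + v * S := by
    have h := mul_le_mul_of_nonneg_left hWlb (le_of_lt hv0)
    have e : v * (16 * ε * b) = 16 * ε * (v * b) := by ring
    rw [e, hvb, mul_one] at h
    linarith
  have hYW : v * Wn ≤ Wn / 11 := by
    have := mul_le_mul_of_nonneg_right hv11 hWn0
    linarith
  have hX3 : S * v^3 ≤ (v * S) / 121 := by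
    have hv2 : v^2 ≤ 1/121 := by nlinarith
    have : S * v^3 = (v * S) * v^2 := by ring
    rw [this]
    have h0 : 0 ≤ v * S := mul_nonneg (le_of_lt hv0) hS0
    nlinarith
  have hX0 : 0 ≤ v * S := mul_nonneg (le_of_lt hv0) hS0
  have hε2 : ε^2 ≤ ε/32 := by nlinarith [hε.1, hε.2]
  have hchain : ∑ j ∈ Ineg ε, F j + (S - P.q t 1 / 2)
      ≤ (1/2) * Wn + 2 * (S * v^3) + 2 * ε^2 + S - (v * S) / 4 := by
    have h1 : ∑ j ∈ Ineg ε, F j ≤ (1/2) * Wn + 2 * (S * v^3) + 4 * (2:ℝ)^(-B) := by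
      rw [← hid1]; exact hnegF
    linarith
  linarith [hchain, hXY, hYW, hX3, hX0, hε2, hWn0, hS0, hεpos]
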